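/- Let 𝕜 be a field, let (X, r) be a set-theoretic solution of the Yang–Baxter equation with X finite, let R : X × X → 𝕜 take only nonzero values (written R_{i,j}), let W be the 𝕜-vector space with basis (w_i)_{i ∈ X}, and let c : W ⊗ W → W ⊗ W be the linear map determined by c(w_i ⊗ w_j) = R_{i,j} w_{σ_i(j)} ⊗ w_{τ_j(i)}. Then c satisfies the braid equation (c ⊗ id) ∘ (id ⊗ c) ∘ (c ⊗ id) = (id ⊗ c) ∘ (c ⊗ id) ∘ (id ⊗ c) on W ⊗ W ⊗ W if and only if R_{i,j} R_{τ_j(i),k} R_{σ_i(j),σ_{τ_j(i)}(k)} = R_{j,k} R_{i,σ_j(k)} R_{τ_{σ_j(k)}(i),τ_k(j)} for all i, j, k ∈ X. -/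

import Mathlib

set_option maxHeartbeats 1000000
set_option synthInstance.maxHeartbeats 1000000


/-! Set-theoretic solutions of the Yang–Baxter equation.
For `r : X × X → X × X` we write `r (i, j) = (σ i j, τ j i)`, i.e. `σ_i(j) = σ i j` and
`τ_j(i) = τ j i`. -/

variable {X : Type*}

/-- The map `r : X × X → X × X` determined by families `σ`, `τ` via
`r (i, j) = (σ_i(j), τ_j(i))`. -/
def rmapF (σ τ : X → X → X) : X × X → X × X := fun p => (σ p.1 p.2, τ p.2 p.1)

/-- `r × id` on `X × X × X`. -/
def ridF (r : X × X → X × X) : X × X × X → X × X × X :=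
  fun p => ((r (p.1, p.2.1)).1, (r (p.1, p.2.1)).2, p.2.2)

/-- `id × r` on `X × X × X`. -/
def idrF (r : X × X → X × X) : X × X × X → X × X × X := fun p => (p.1, r p.2)

/-- The braid (Yang–Baxter) equation `(r × id) ∘ (id × r) ∘ (r × id) = (id × r) ∘ (r × id) ∘ (id × r)`. -/
def BraidEq (r : X × X → X × X) : Prop :=
  ridF r ∘ idrF r ∘ ridF r = idrF r ∘ ridF r ∘ idrF r

/-- A non-degenerate involutive set-theoretic solution of the Yang–Baxter equation on `X`:
the maps `σ_i` and `τ_i` are bijective (packaged as equivalences), the induced map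
`r (i, j) = (σ_i(j), τ_j(i))` satisfies the braid equation, and `r ∘ r = id`
(which in particular makes `r` bijective). -/
structure NDIS (X : Type*) where
  σ : X → X ≃ X
  τ : X → X ≃ X
  braid : BraidEq (rmapF (fun i => ⇑(σ i)) (fun i => ⇑(τ i)))
  invol : ∀ p : X × X,
    rmapF (fun i => ⇑(σ i)) (fun i => ⇑(τ i))
      (rmapF (fun i => ⇑(σ i)) (fun i => ⇑(τ i)) p) = p

namespace NDIS

/-- The map `r` of the solution. -/
def r (S : NDIS X) : X × X → X × X := rmapF (fun i => ⇑(S.σ i)) (fun i => ⇑(S.τ i))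

/-- The diagonal `D : X → X`, `D(i) = τ_i⁻¹(i)`. -/
def D (S : NDIS X) : X → X := fun i => (S.τ i).symm i

end NDIS


open TensorProduct in
private lemma aux_lhs {X : Type*} {𝕜 : Type*} [Field 𝕜] (σ τ : X → X → X)
    (R : X × X → 𝕜)
    (c : ((X →₀ 𝕜) ⊗[𝕜] (X →₀ 𝕜)) →ₗ[𝕜] ((X →₀ 𝕜) ⊗[𝕜] (X →₀ 𝕜)))
    (hc : ∀ i j : X,
      c (Finsupp.single i (1 : 𝕜) ⊗ₜ[𝕜] Finsupp.single j (1 : 𝕜)) =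
        R (i, j) •
          (Finsupp.single (σ i j) (1 : 𝕜) ⊗ₜ[𝕜] Finsupp.single (τ j i) (1 : 𝕜)))
    (i j k : X) :
    (LinearMap.rTensor (X →₀ 𝕜) c ∘ₗ
        ((TensorProduct.assoc 𝕜 (X →₀ 𝕜) (X →₀ 𝕜) (X →₀ 𝕜)).symm.toLinearMap ∘ₗ
          LinearMap.lTensor (X →₀ 𝕜) c ∘ₗ
          (TensorProduct.assoc 𝕜 (X →₀ 𝕜) (X →₀ 𝕜) (X →₀ 𝕜)).toLinearMap) ∘ₗ
        LinearMap.rTensor (X →₀ 𝕜) c)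
      ((Finsupp.single i (1 : 𝕜) ⊗ₜ[𝕜] Finsupp.single j (1 : 𝕜)) ⊗ₜ[𝕜]
        Finsupp.single k (1 : 𝕜)) =
      (R (i, j) * R (τ j i, k) * R (σ i j, σ (τ j i) k)) •
        ((Finsupp.single (σ (σ i j) (σ (τ j i) k)) (1 : 𝕜) ⊗ₜ[𝕜]
            Finsupp.single (τ (σ (τ j i) k) (σ i j)) (1 : 𝕜)) ⊗ₜ[𝕜]
          Finsupp.single (τ k (τ j i)) (1 : 𝕜)) := by
  simp only [LinearMap.comp_apply, LinearEquiv.coe_coe, hc,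
    ← TensorProduct.smul_tmul', TensorProduct.tmul_smul, map_smul,
    LinearMap.rTensor_tmul, LinearMap.lTensor_tmul, TensorProduct.assoc_tmul,
    TensorProduct.assoc_symm_tmul, smul_smul]

open TensorProduct in
private lemma aux_rhs {X : Type*} {𝕜 : Type*} [Field 𝕜] (σ τ : X → X → X)
    (R : X × X → 𝕜)
    (c : ((X →₀ 𝕜) ⊗[𝕜] (X →₀ 𝕜)) →ₗ[𝕜] ((X →₀ 𝕜) ⊗[𝕜] (X →₀ 𝕜)))
    (hc : ∀ i j : X,
      c (Finsupp.single i (1 : 𝕜) ⊗ₜ[𝕜] Finsupp.single j (1 : 𝕜)) =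
        R (i, j) •
          (Finsupp.single (σ i j) (1 : 𝕜) ⊗ₜ[𝕜] Finsupp.single (τ j i) (1 : 𝕜)))
    (i j k : X) :
    (((TensorProduct.assoc 𝕜 (X →₀ 𝕜) (X →₀ 𝕜) (X →₀ 𝕜)).symm.toLinearMap ∘ₗ
          LinearMap.lTensor (X →₀ 𝕜) c ∘ₗ
          (TensorProduct.assoc 𝕜 (X →₀ 𝕜) (X →₀ 𝕜) (X →₀ 𝕜)).toLinearMap) ∘ₗ
        LinearMap.rTensor (X →₀ 𝕜) c ∘ₗ
        ((TensorProduct.assoc 𝕜 (X →₀ 𝕜) (X →₀ 𝕜) (X →₀ 𝕜)).symm.toLinearMap ∘ₗ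
          LinearMap.lTensor (X →₀ 𝕜) c ∘ₗ
          (TensorProduct.assoc 𝕜 (X →₀ 𝕜) (X →₀ 𝕜) (X →₀ 𝕜)).toLinearMap))
      ((Finsupp.single i (1 : 𝕜) ⊗ₜ[𝕜] Finsupp.single j (1 : 𝕜)) ⊗ₜ[𝕜]
        Finsupp.single k (1 : 𝕜)) =
      (R (j, k) * R (i, σ j k) * R (τ (σ j k) i, τ k j)) •
        ((Finsupp.single (σ i (σ j k)) (1 : 𝕜) ⊗ₜ[𝕜]
            Finsupp.single (σ (τ (σ j k) i) (τ k j)) (1 : 𝕜)) ⊗ₜ[𝕜]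
          Finsupp.single (τ (τ k j) (τ (σ j k) i)) (1 : 𝕜)) := by
  simp only [LinearMap.comp_apply, LinearEquiv.coe_coe, hc,
    ← TensorProduct.smul_tmul', TensorProduct.tmul_smul, map_smul,
    LinearMap.rTensor_tmul, LinearMap.lTensor_tmul, TensorProduct.assoc_tmul,
    TensorProduct.assoc_symm_tmul, smul_smul]

open TensorProduct in
/-- Let `(X, r)` be a set-theoretic solution of the YBE with `X` finite,
`R : X × X → 𝕜` nowhere zero, `W = X →₀ 𝕜` the `𝕜`-vector space with basis `(w_i)`,
and `c : W ⊗ W → W ⊗ W` the linear map determined by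
`c(w_i ⊗ w_j) = R_{i,j} w_{σ_i(j)} ⊗ w_{τ_j(i)}`. Then `c` satisfies the braid equation
`(c ⊗ id)(id ⊗ c)(c ⊗ id) = (id ⊗ c)(c ⊗ id)(id ⊗ c)` on `W ⊗ W ⊗ W` iff
`R_{i,j} R_{τ_j(i),k} R_{σ_i(j),σ_{τ_j(i)}(k)} = R_{j,k} R_{i,σ_j(k)} R_{τ_{σ_j(k)}(i),τ_k(j)}`
for all `i, j, k ∈ X`. (The middle map `id ⊗ c` is transported along the associator.) -/
theorem braiding_iff_coefficient_relation {X : Type*} [Fintype X] [Nonempty X]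
    (𝕜 : Type*) [Field 𝕜] (σ τ : X → X → X)
    (hbraid : BraidEq (rmapF σ τ)) (hbij : Function.Bijective (rmapF σ τ))
    (R : X × X → 𝕜) (hR : ∀ p, R p ≠ 0)
    (c : ((X →₀ 𝕜) ⊗[𝕜] (X →₀ 𝕜)) →ₗ[𝕜] ((X →₀ 𝕜) ⊗[𝕜] (X →₀ 𝕜)))
    (hc : ∀ i j : X,
      c (Finsupp.single i (1 : 𝕜) ⊗ₜ[𝕜] Finsupp.single j (1 : 𝕜)) =
        R (i, j) •
          (Finsupp.single (σ i j) (1 : 𝕜) ⊗ₜ[𝕜] Finsupp.single (τ j i) (1 : 𝕜))) :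
    (LinearMap.rTensor (X →₀ 𝕜) c ∘ₗ
        ((TensorProduct.assoc 𝕜 (X →₀ 𝕜) (X →₀ 𝕜) (X →₀ 𝕜)).symm.toLinearMap ∘ₗ
          LinearMap.lTensor (X →₀ 𝕜) c ∘ₗ
          (TensorProduct.assoc 𝕜 (X →₀ 𝕜) (X →₀ 𝕜) (X →₀ 𝕜)).toLinearMap) ∘ₗ
        LinearMap.rTensor (X →₀ 𝕜) c =
      ((TensorProduct.assoc 𝕜 (X →₀ 𝕜) (X →₀ 𝕜) (X →₀ 𝕜)).symm.toLinearMap ∘ₗ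
          LinearMap.lTensor (X →₀ 𝕜) c ∘ₗ
          (TensorProduct.assoc 𝕜 (X →₀ 𝕜) (X →₀ 𝕜) (X →₀ 𝕜)).toLinearMap) ∘ₗ
        LinearMap.rTensor (X →₀ 𝕜) c ∘ₗ
        ((TensorProduct.assoc 𝕜 (X →₀ 𝕜) (X →₀ 𝕜) (X →₀ 𝕜)).symm.toLinearMap ∘ₗ
          LinearMap.lTensor (X →₀ 𝕜) c ∘ₗ
          (TensorProduct.assoc 𝕜 (X →₀ 𝕜) (X →₀ 𝕜) (X →₀ 𝕜)).toLinearMap)) ↔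
      ∀ i j k : X,
        R (i, j) * R (τ j i, k) * R (σ i j, σ (τ j i) k) =
          R (j, k) * R (i, σ j k) * R (τ (σ j k) i, τ k j) := by
  classical
  have hidx : ∀ i j k : X,
      σ (σ i j) (σ (τ j i) k) = σ i (σ j k) ∧
       τ (σ (τ j i) k) (σ i j) = σ (τ (σ j k) i) (τ k j) ∧
      τ k (τ j i) = τ (τ k j) (τ (σ j k) i) := by
    intro i j k
    have h := congrFun hbraid (i, (j, k))
    simpa [ridF, idrF, rmapF, Function.comp, Prod.ext_iff] using h
  constructor
  · intro h i j k
    have h1 := LinearMap.congr_fun h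
      ((Finsupp.single i (1 : 𝕜) ⊗ₜ[𝕜] Finsupp.single j (1 : 𝕜)) ⊗ₜ[𝕜]
        Finsupp.single k (1 : 𝕜))
    rw [aux_lhs σ τ R c hc, aux_rhs σ τ R c hc, (hidx i j k).1, (hidx i j k).2.1,
      (hidx i j k).2.2] at h1
    set B := (((Finsupp.basisSingleOne : Module.Basis X 𝕜 (X →₀ 𝕜)).tensorProduct
        (Finsupp.basisSingleOne : Module.Basis X 𝕜 (X →₀ 𝕜))).tensorProduct
        (Finsupp.basisSingleOne : Module.Basis X 𝕜 (X →₀ 𝕜))) with hB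
    set p : (X × X) × X := ((σ i (σ j k), σ (τ (σ j k) i) (τ k j)),
        τ (τ k j) (τ (σ j k) i)) with hp
    have hbv : (Finsupp.single (σ i (σ j k)) (1 : 𝕜) ⊗ₜ[𝕜]
          Finsupp.single (σ (τ (σ j k) i) (τ k j)) (1 : 𝕜)) ⊗ₜ[𝕜]
          Finsupp.single (τ (τ k j) (τ (σ j k) i)) (1 : 𝕜) = B p := by
      simp [hB, hp, Module.Basis.tensorProduct_apply, Finsupp.coe_basisSingleOne]
    rw [hbv] at h1
    have h2 := congrArg (fun t => B.repr t p) h1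
    simpa [map_smul, Module.Basis.repr_self] using h2
  · intro h
    apply (((Finsupp.basisSingleOne : Module.Basis X 𝕜 (X →₀ 𝕜)).tensorProduct (Finsupp.basisSingleOne : Module.Basis X 𝕜 (X →₀ 𝕜))).tensorProduct
      (Finsupp.basisSingleOne : Module.Basis X 𝕜 (X →₀ 𝕜))).ext
    rintro ⟨⟨i, j⟩, k⟩
    simp only [Module.Basis.tensorProduct_apply, Finsupp.coe_basisSingleOne]
    rw [aux_lhs σ τ R c hc, aux_rhs σ τ R c hc, (hidx i j k).1, (hidx i j k).2.1,
      (hidx i j k).2.2, h i j k]
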